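/- Let n ≥ 3. Then |A| = (∏_{i=1}^{n−1} a_i + Σ_{j=1}^{n−1} d_j · ∏_{1 ≤ i ≤ n−1, i ≠ j} a_i) · (a_n + d_n). -/

import Mathlib

open Finset

/-- The set `A`: lattice points `v ∈ ℤ^(m+1)` with `-dᵢ < vᵢ ≤ aᵢ` for all `i`, and for all
pairs `i < j` with `j` not the last index, `dⱼ(vᵢ - aᵢ) ≤ dᵢ vⱼ` and `dᵢ vⱼ < dⱼ vᵢ + dᵢ aⱼ`. -/
def setA (m : ℕ) (a d : Fin (m + 1) → ℤ) : Set (Fin (m + 1) → ℤ) :=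
  {v | (∀ i, -d i < v i ∧ v i ≤ a i) ∧
    ∀ i j : Fin (m + 1), i < j → j ≠ Fin.last m →
      d j * (v i - a i) ≤ d i * v j ∧ d i * v j < d j * v i + d i * a j}

open Finset

/-- helper: characterization of `(n, n + D*A]` window by shifted coordinate. -/
lemma windowIcc {D n A x : ℤ} (hD : 0 < D) :
    x - n.fdiv D ∈ Finset.Icc 1 A ↔ (n < D * x ∧ D * x ≤ n + D * A) := by
  have hq := Int.mul_fdiv_add_fmod n D
  have hr0 : 0 ≤ n.fmod D := Int.fmod_nonneg_of_pos n hD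
  have hr1 : n.fmod D < D := Int.fmod_lt_of_pos n hD
  set q := n.fdiv D with hqd
  set r := n.fmod D with hrd
  simp only [Finset.mem_Icc]
  constructor
  · rintro ⟨h1, h2⟩
    constructor
    · nlinarith
    · nlinarith
  · rintro ⟨h1, h2⟩
    constructor
    · nlinarith [mul_pos hD (show (0:ℤ) < x - q by nlinarith)]
    · nlinarith [mul_pos hD (show (0:ℤ) < q + 1 + A - x by nlinarith)]

lemma windowIco {D n A x : ℤ} (hD : 0 < D) :
    x + (-n).fdiv D ∈ Finset.Ico 0 A ↔ (n ≤ D * x ∧ D * x < n + D * A) := by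
  have hq := Int.mul_fdiv_add_fmod (-n) D
  have hr0 : 0 ≤ (-n).fmod D := Int.fmod_nonneg_of_pos (-n) hD
  have hr1 : (-n).fmod D < D := Int.fmod_lt_of_pos (-n) hD
  set q := (-n).fdiv D with hqd
  set r := (-n).fmod D with hrd
  simp only [Finset.mem_Ico]
  constructor
  · rintro ⟨h1, h2⟩
    constructor
    · nlinarith
    · nlinarith
  · rintro ⟨h1, h2⟩
    constructor
    · nlinarith [mul_pos hD (show (0:ℤ) < x + q + 1 by nlinarith)]
    · nlinarith [mul_pos hD (show (0:ℤ) < A - x - q by nlinarith)]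
open Finset

section
variable {m : ℕ} (a d : Fin (m+1) → ℤ)

noncomputable def A11pos : Finset (Fin (m+1) → ℤ) :=
  Fintype.piFinset fun i => if i = Fin.last m then Finset.Ioc (-d i) (a i) else Finset.Icc 1 (a i)

noncomputable def A11base (j : Fin m) : Finset (Fin (m+1) → ℤ) :=
  Fintype.piFinset fun i =>
    if i = Fin.last m then Finset.Ioc (-d i) (a i)
    else if i = j.castSucc then Finset.Ioc (-d i) 0
    else if i < j.castSucc then Finset.Icc 1 (a i)
    else Finset.Ico 0 (a i)

def A11toV (j : Fin m) (w : Fin (m+1) → ℤ) : Fin (m+1) → ℤ := fun i =>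
  if i = Fin.last m ∨ i = j.castSucc then w i
  else if i < j.castSucc then w i + (d i * w j.castSucc).fdiv (d j.castSucc)
  else w i - (-(d i * w j.castSucc)).fdiv (d j.castSucc)

noncomputable def A11neg (j : Fin m) : Finset (Fin (m+1) → ℤ) := (A11base a d j).image (A11toV d j)

def A11Cond (j : Fin m) (v : Fin (m+1) → ℤ) : Prop :=
  (-d j.castSucc < v j.castSucc ∧ v j.castSucc ≤ 0) ∧
  (-d (Fin.last m) < v (Fin.last m) ∧ v (Fin.last m) ≤ a (Fin.last m)) ∧
  ∀ i : Fin (m+1), i ≠ Fin.last m → i ≠ j.castSucc →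
    (i < j.castSucc → d i * v j.castSucc < d j.castSucc * v i ∧
        d j.castSucc * v i ≤ d i * v j.castSucc + d j.castSucc * a i) ∧
    (j.castSucc < i → d i * v j.castSucc ≤ d j.castSucc * v i ∧
        d j.castSucc * v i < d i * v j.castSucc + d j.castSucc * a i)

lemma toV_last (j : Fin m) (w : Fin (m+1) → ℤ) : A11toV d j w (Fin.last m) = w (Fin.last m) :=
  if_pos (Or.inl rfl)

lemma toV_cs (j : Fin m) (w : Fin (m+1) → ℤ) : A11toV d j w j.castSucc = w j.castSucc :=
  if_pos (Or.inr rfl)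

lemma mem_negPart_iff (hd : ∀ i, 0 < d i) (j : Fin m) (v : Fin (m+1) → ℤ) :
    v ∈ A11neg a d j ↔ A11Cond a d j v := by
  have hdJ : 0 < d j.castSucc := hd _
  constructor
  · rintro hv
    obtain ⟨w, hw, rfl⟩ := Finset.mem_image.1 hv
    rw [A11base, Fintype.mem_piFinset] at hw
    have hJ := hw j.castSucc
    have hne : j.castSucc ≠ Fin.last m := (Fin.castSucc_lt_last j).ne
    rw [if_neg hne, if_pos rfl, Finset.mem_Ioc] at hJ
    have hL := hw (Fin.last m)
    rw [if_pos rfl, Finset.mem_Ioc] at hL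
    refine ⟨by rwa [toV_cs], by rwa [toV_last], ?_⟩
    intro i hiL hiJ
    have hwi := hw i
    rw [if_neg hiL, if_neg hiJ] at hwi
    rw [toV_cs]
    constructor
    · intro hlt
      rw [if_pos hlt, Finset.mem_Icc] at hwi
      have : A11toV d j w i = w i + (d i * w j.castSucc).fdiv (d j.castSucc) := by
        rw [A11toV, if_neg (by simp [hiL, hiJ]), if_pos hlt]
      rw [this]
      have := (windowIcc (n := d i * w j.castSucc) (A := a i)
        (x := w i + (d i * w j.castSucc).fdiv (d j.castSucc)) hdJ).1 (by simpa using hwi)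
      exact this
    · intro hgt
      have hnlt : ¬ i < j.castSucc := not_lt.2 hgt.le
      rw [if_neg hnlt, Finset.mem_Ico] at hwi
      have : A11toV d j w i = w i - (-(d i * w j.castSucc)).fdiv (d j.castSucc) := by
        rw [A11toV, if_neg (by simp [hiL, hiJ]), if_neg hnlt]
      rw [this]
      have := (windowIco (n := d i * w j.castSucc) (A := a i)
        (x := w i - (-(d i * w j.castSucc)).fdiv (d j.castSucc)) hdJ).1 (by simpa using hwi)
      exact this
  · rintro ⟨hJ, hL, hwin⟩
    set w : Fin (m+1) → ℤ := fun i =>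
      if i = Fin.last m ∨ i = j.castSucc then v i
      else if i < j.castSucc then v i - (d i * v j.castSucc).fdiv (d j.castSucc)
      else v i + (-(d i * v j.castSucc)).fdiv (d j.castSucc) with hwdef
    have hwJ : w j.castSucc = v j.castSucc := if_pos (Or.inr rfl)
    refine Finset.mem_image.2 ⟨w, ?_, ?_⟩
    · rw [A11base, Fintype.mem_piFinset]
      intro i
      by_cases hiL : i = Fin.last m
      · subst hiL
        rw [if_pos rfl]
        simp only [hwdef]
        simpa using hL
      by_cases hiJ : i = j.castSucc
      · subst hiJ
        rw [if_neg hiL, if_pos rfl, hwJ]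
        simpa using hJ
      rw [if_neg hiL, if_neg hiJ]
      have hwi : w i = if i < j.castSucc then v i - (d i * v j.castSucc).fdiv (d j.castSucc)
          else v i + (-(d i * v j.castSucc)).fdiv (d j.castSucc) := by
        rw [hwdef]; simp [hiL, hiJ]
      rcases lt_or_gt_of_ne (fun h : i = j.castSucc => hiJ h) with hlt | hgt
      · rw [if_pos hlt, hwi, if_pos hlt]
        exact (windowIcc hdJ).2 ((hwin i hiL hiJ).1 hlt)
      · have hnlt : ¬ i < j.castSucc := not_lt.2 hgt.le
        rw [if_neg hnlt, hwi, if_neg hnlt]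
        exact (windowIco hdJ).2 ((hwin i hiL hiJ).2 hgt)
    · funext i
      by_cases hiB : i = Fin.last m ∨ i = j.castSucc
      · rw [A11toV, if_pos hiB, hwdef]; simp [hiB]
      push_neg at hiB
      obtain ⟨hiL, hiJ⟩ := hiB
      have hwi : w i = if i < j.castSucc then v i - (d i * v j.castSucc).fdiv (d j.castSucc)
          else v i + (-(d i * v j.castSucc)).fdiv (d j.castSucc) := by
        rw [hwdef]; simp [hiL, hiJ]
      rw [A11toV, if_neg (by simp [hiL, hiJ]), hwJ]
      by_cases hlt : i < j.castSucc
      · rw [if_pos hlt, hwi, if_pos hlt]; ring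
      · rw [if_neg hlt, hwi, if_neg hlt]; ring
end

lemma negCond_mem_setA {m : ℕ} {a d : Fin (m+1) → ℤ} (ha : ∀ i, 0 < a i) (hd : ∀ i, 0 < d i)
    (j : Fin m) (v : Fin (m+1) → ℤ) (h : A11Cond a d j v) : v ∈ setA m a d := by
  obtain ⟨⟨hJ1, hJ2⟩, ⟨hL1, hL2⟩, hwin⟩ := h
  set J := j.castSucc with hJdef
  set c := v J with hcdef
  have hdJ : 0 < d J := hd J
  have key : ∀ i : Fin (m+1), i ≠ Fin.last m →
      d i * c ≤ d J * v i ∧ d J * v i ≤ d i * c + d J * a i := by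
    intro i hiL
    by_cases hiJ : i = J
    · subst hiJ
      exact ⟨by rw [hcdef], by nlinarith [mul_pos hdJ (ha J)]⟩
    · rcases lt_or_gt_of_ne (fun hh : i = J => hiJ hh) with hlt | hgt
      · obtain ⟨h1, h2⟩ := (hwin i hiL hiJ).1 hlt
        exact ⟨h1.le, h2⟩
      · obtain ⟨h1, h2⟩ := (hwin i hiL hiJ).2 hgt
        exact ⟨h1, h2.le⟩
  have keyslow : ∀ i : Fin (m+1), i < J → d i * c < d J * v i := by
    intro i hlt
    exact ((hwin i (ne_of_lt (lt_of_lt_of_le hlt (Fin.le_last J)))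
      (ne_of_lt hlt)).1 hlt).1
  have keysupp : ∀ i : Fin (m+1), i ≠ Fin.last m → J < i →
      d J * v i < d i * c + d J * a i := by
    intro i hiL hgt
    exact ((hwin i hiL (ne_of_gt hgt)).2 hgt).2
  constructor
  · -- box
    intro i
    by_cases hiL : i = Fin.last m
    · subst hiL; exact ⟨hL1, hL2⟩
    obtain ⟨low, upp⟩ := key i hiL
    constructor
    · have h1 : d J * (-d i) < d J * v i := by nlinarith [mul_pos (hd i) hdJ]
      exact lt_of_mul_lt_mul_left h1 hdJ.le
    · have h2 : d J * v i ≤ d J * a i := by nlinarith [mul_nonpos_of_nonneg_of_nonpos (hd i).le hJ2]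
      exact le_of_mul_le_mul_left h2 hdJ
  · -- pairs
    intro p q hpq hqL
    have hpL : p ≠ Fin.last m := by
      intro hp
      exact hqL (le_antisymm (Fin.le_last q) (hp ▸ hpq.le))
    obtain ⟨lp, up⟩ := key p hpL
    obtain ⟨lq, uq⟩ := key q hqL
    constructor
    · have h1 : d J * (d q * (v p - a p)) ≤ d J * (d p * v q) := by
        nlinarith [mul_le_mul_of_nonneg_left up (hd q).le,
          mul_le_mul_of_nonneg_left lq (hd p).le]
      exact le_of_mul_le_mul_left h1 hdJ
    · by_cases hpJ : p < J
      · have hs := keyslow p hpJ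
        have h1 : d J * (d p * v q) < d J * (d q * v p + d p * a q) := by
          nlinarith [mul_le_mul_of_nonneg_left uq (hd p).le,
            mul_lt_mul_of_pos_left hs (hd q)]
        exact lt_of_mul_lt_mul_left h1 hdJ.le
      · have hJq : J < q := lt_of_le_of_lt (not_lt.1 hpJ) hpq
        have hs := keysupp q hqL hJq
        have h1 : d J * (d p * v q) < d J * (d q * v p + d p * a q) := by
          nlinarith [mul_lt_mul_of_pos_left hs (hd p),
            mul_le_mul_of_nonneg_left lp (hd q).le]
        exact lt_of_mul_lt_mul_left h1 hdJ.le

lemma posPart_mem_setA {m : ℕ} {a d : Fin (m+1) → ℤ} (ha : ∀ i, 0 < a i) (hd : ∀ i, 0 < d i)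
    (v : Fin (m+1) → ℤ) (h : v ∈ A11pos a d) : v ∈ setA m a d := by
  simp only [A11pos, Fintype.mem_piFinset] at h
  have hbox : ∀ i : Fin (m+1), i ≠ Fin.last m → 1 ≤ v i ∧ v i ≤ a i := by
    intro i hiL
    have := h i
    rw [if_neg hiL, Finset.mem_Icc] at this
    exact this
  constructor
  · intro i
    by_cases hiL : i = Fin.last m
    · subst hiL
      have := h (Fin.last m)
      rw [if_pos rfl, Finset.mem_Ioc] at this
      exact this
    · obtain ⟨h1, h2⟩ := hbox i hiL
      exact ⟨by linarith [hd i], h2⟩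
  · intro p q hpq hqL
    have hpL : p ≠ Fin.last m := by
      intro hp
      exact hqL (le_antisymm (Fin.le_last q) (hp ▸ hpq.le))
    obtain ⟨hp1, hp2⟩ := hbox p hpL
    obtain ⟨hq1, hq2⟩ := hbox q hqL
    constructor
    · nlinarith [hd p, hd q]
    · nlinarith [hd p, hd q]

lemma setA_cover {m : ℕ} {a d : Fin (m+1) → ℤ} (hd : ∀ i, 0 < d i)
    (v : Fin (m+1) → ℤ) (hv : v ∈ setA m a d) :
    v ∈ A11pos a d ∨ ∃ j : Fin m, A11Cond a d j v := by
  obtain ⟨hbox, hpair⟩ := hv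
  by_cases hall : ∀ i : Fin m, 1 ≤ v i.castSucc
  · left
    rw [A11pos, Fintype.mem_piFinset]
    intro i
    by_cases hiL : i = Fin.last m
    · subst hiL
      rw [if_pos rfl, Finset.mem_Ioc]
      exact hbox _
    · rw [if_neg hiL, Finset.mem_Icc]
      obtain ⟨i', rfl⟩ := Fin.exists_castSucc_eq.2 hiL
      exact ⟨hall i', (hbox _).2⟩
  · right
    push_neg at hall
    obtain ⟨i0, hi0⟩ := hall
    have hi0' : v i0.castSucc ≤ 0 := by omega
    set f : Fin m → ℚ := fun i => (v i.castSucc : ℚ) / (d i.castSucc : ℚ) with hf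
    have hdpos : ∀ i : Fin m, (0:ℚ) < (d i.castSucc : ℚ) := fun i => by exact_mod_cast hd _
    have crossle : ∀ i k : Fin m, f i ≤ f k →
        d k.castSucc * v i.castSucc ≤ d i.castSucc * v k.castSucc := by
      intro i k h
      rw [hf] at h
      rw [div_le_div_iff₀ (hdpos i) (hdpos k)] at h
      have : (d k.castSucc * v i.castSucc : ℚ) ≤ (d i.castSucc * v k.castSucc : ℚ) := by
        push_cast
        linarith
      exact_mod_cast this
    have crosslt : ∀ i k : Fin m, f i < f k →
        d k.castSucc * v i.castSucc < d i.castSucc * v k.castSucc := by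
      intro i k h
      rw [hf] at h
      rw [div_lt_div_iff₀ (hdpos i) (hdpos k)] at h
      have : (d k.castSucc * v i.castSucc : ℚ) < (d i.castSucc * v k.castSucc : ℚ) := by
        push_cast
        linarith
      exact_mod_cast this
    set S := Finset.univ.filter (fun i => ∀ k, f i ≤ f k) with hS
    have hSne : S.Nonempty := by
      obtain ⟨z, _, hz⟩ := Finset.exists_min_image Finset.univ f ⟨i0, Finset.mem_univ i0⟩
      exact ⟨z, Finset.mem_filter.2 ⟨Finset.mem_univ z, fun k => hz k (Finset.mem_univ k)⟩⟩
    set j := S.min' hSne with hj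
    have hjS : j ∈ S := S.min'_mem hSne
    have hjmin : ∀ k, f j ≤ f k := (Finset.mem_filter.1 hjS).2
    have hjlt : ∀ i : Fin m, i < j → f j < f i := by
      intro i hij
      by_contra hcon
      push_neg at hcon
      have hiS : i ∈ S := Finset.mem_filter.2 ⟨Finset.mem_univ i,
        fun k => le_trans hcon (hjmin k)⟩
      exact absurd (S.min'_le i hiS) (not_le.2 hij)
    refine ⟨j, ⟨(hbox _).1, ?_⟩, hbox _, ?_⟩
    · have h1 := crossle j i0 (hjmin i0)
      nlinarith [hd i0.castSucc, hd j.castSucc]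
    · intro i hiL hiJ
      obtain ⟨i', rfl⟩ := Fin.exists_castSucc_eq.2 hiL
      constructor
      · intro hlt
        have hij : i' < j := Fin.castSucc_lt_castSucc_iff.1 hlt
        constructor
        · exact crosslt j i' (hjlt i' hij)
        · have hp := (hpair i'.castSucc j.castSucc hlt (Fin.castSucc_lt_last j).ne).1
          rw [mul_sub] at hp
          linarith
      · intro hgt
        have hij : j < i' := Fin.castSucc_lt_castSucc_iff.1 hgt
        exact ⟨crossle j i' (hjmin i'),
          (hpair j.castSucc i'.castSucc hgt (Fin.castSucc_lt_last i').ne).2⟩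

lemma A11toV_inj {m : ℕ} (d : Fin (m+1) → ℤ) (j : Fin m) : Function.Injective (A11toV d j) := by
  intro w w' h
  have hJ : w j.castSucc = w' j.castSucc := by
    have := congrFun h j.castSucc
    rwa [toV_cs, toV_cs] at this
  funext i
  have hi := congrFun h i
  by_cases hiB : i = Fin.last m ∨ i = j.castSucc
  · rwa [A11toV, A11toV, if_pos hiB, if_pos hiB] at hi
  · rw [A11toV, A11toV, if_neg hiB, if_neg hiB, hJ] at hi
    by_cases hlt : i < j.castSucc
    · rw [if_pos hlt, if_pos hlt] at hi
      exact add_right_cancel hi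
    · rw [if_neg hlt, if_neg hlt] at hi
      omega

lemma one_le_of_mem_A11pos {m : ℕ} {a d : Fin (m+1) → ℤ} {v : Fin (m+1) → ℤ}
    (h : v ∈ A11pos a d) (j : Fin m) : 1 ≤ v j.castSucc := by
  rw [A11pos, Fintype.mem_piFinset] at h
  have := h j.castSucc
  rw [if_neg (Fin.castSucc_lt_last j).ne, Finset.mem_Icc] at this
  exact this.1

lemma A11neg_disj {m : ℕ} {a d : Fin (m+1) → ℤ} (hd : ∀ i, 0 < d i) {j k : Fin m}
    (hjk : j < k) : Disjoint (A11neg a d j) (A11neg a d k) := by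
  rw [Finset.disjoint_left]
  intro v hj hk
  have hcsjk : j.castSucc < k.castSucc := Fin.castSucc_lt_castSucc_iff.2 hjk
  have h1 := ((mem_negPart_iff a d hd j v).1 hj).2.2 k.castSucc
    (Fin.castSucc_lt_last k).ne (ne_of_gt hcsjk)
  have h2 := ((mem_negPart_iff a d hd k v).1 hk).2.2 j.castSucc
    (Fin.castSucc_lt_last j).ne (ne_of_lt hcsjk)
  have h1' := (h1.2 hcsjk).1
  have h2' := (h2.1 hcsjk).1
  linarith

lemma card_A11pos {m : ℕ} {a d : Fin (m+1) → ℤ} (ha : ∀ i, 0 < a i) (hd : ∀ i, 0 < d i) :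
    (((A11pos a d).card : ℤ)) =
      (∏ i : Fin m, a i.castSucc) * (a (Fin.last m) + d (Fin.last m)) := by
  rw [A11pos, Fintype.card_piFinset, Fin.prod_univ_castSucc, if_pos rfl, Int.card_Ioc]
  rw [Finset.prod_congr rfl (fun (i : Fin m) _ =>
    show (if i.castSucc = Fin.last m then Finset.Ioc (-d i.castSucc) (a i.castSucc)
        else Finset.Icc 1 (a i.castSucc)).card = (a i.castSucc).toNat by
      rw [if_neg (Fin.castSucc_lt_last i).ne, Int.card_Icc]
      have := ha i.castSucc
      omega)]
  push_cast
  rw [Finset.prod_congr rfl (fun (i : Fin m) _ =>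
    show (((a i.castSucc).toNat : ℤ)) = a i.castSucc from Int.toNat_of_nonneg (ha _).le)]
  have h1 : ((a (Fin.last m) - -d (Fin.last m)).toNat : ℤ)
      = a (Fin.last m) + d (Fin.last m) := by
    have := ha (Fin.last m); have := hd (Fin.last m); omega
  rw [h1]

lemma card_A11neg {m : ℕ} {a d : Fin (m+1) → ℤ} (ha : ∀ i, 0 < a i) (hd : ∀ i, 0 < d i)
    (j : Fin m) :
    (((A11neg a d j).card : ℤ)) =
      d j.castSucc * (∏ i ∈ Finset.univ.erase j, a i.castSucc) *
        (a (Fin.last m) + d (Fin.last m)) := by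
  rw [A11neg, Finset.card_image_of_injective _ (A11toV_inj d j), A11base,
    Fintype.card_piFinset, Fin.prod_univ_castSucc, if_pos rfl, Int.card_Ioc]
  rw [Finset.prod_congr rfl (fun (i : Fin m) _ =>
    show (if i.castSucc = Fin.last m then Finset.Ioc (-d i.castSucc) (a i.castSucc)
        else if i.castSucc = j.castSucc then Finset.Ioc (-d i.castSucc) 0
        else if i.castSucc < j.castSucc then Finset.Icc 1 (a i.castSucc)
        else Finset.Ico 0 (a i.castSucc)).card =
      (if i = j then (d j.castSucc).toNat else (a i.castSucc).toNat) by
      rw [if_neg (Fin.castSucc_lt_last i).ne]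
      by_cases hij : i = j
      · subst hij
        rw [if_pos rfl, if_pos rfl, Int.card_Ioc]
        have := hd i.castSucc; omega
      · rw [if_neg (fun h => hij (Fin.castSucc_injective _ h)), if_neg hij]
        by_cases hlt : i.castSucc < j.castSucc
        · rw [if_pos hlt, Int.card_Icc]
          have := ha i.castSucc; omega
        · rw [if_neg hlt, Int.card_Ico]
          have := ha i.castSucc; omega)]
  rw [← Finset.mul_prod_erase Finset.univ _ (Finset.mem_univ j), if_pos rfl]
  rw [Finset.prod_congr rfl (fun (i : Fin m) (hi : i ∈ Finset.univ.erase j) =>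
    if_neg (Finset.ne_of_mem_erase hi))]
  push_cast
  rw [Int.toNat_of_nonneg (hd j.castSucc).le]
  rw [Finset.prod_congr rfl (fun (i : Fin m) _ =>
    show (((a i.castSucc).toNat : ℤ)) = a i.castSucc from Int.toNat_of_nonneg (ha _).le)]
  have h1 : ((a (Fin.last m) - -d (Fin.last m)).toNat : ℤ)
      = a (Fin.last m) + d (Fin.last m) := by
    have := ha (Fin.last m); have := hd (Fin.last m); omega
  rw [h1]

theorem stmt11 (m : ℕ) (hm : 2 ≤ m) (a d : Fin (m + 1) → ℤ)
    (ha : ∀ i, 0 < a i) (hd : ∀ i, 0 < d i) :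
    ((setA m a d).ncard : ℤ) =
      (∏ i : Fin m, a i.castSucc +
          ∑ j : Fin m, d j.castSucc * ∏ i ∈ Finset.univ.erase j, a i.castSucc) *
        (a (Fin.last m) + d (Fin.last m)) := by
  classical
  set F : Finset (Fin (m+1) → ℤ) :=
    A11pos a d ∪ Finset.univ.biUnion (A11neg a d) with hF
  have hset : setA m a d = ↑F := by
    ext v
    constructor
    · intro hv
      rcases setA_cover hd v hv with h | ⟨j, h⟩
      · exact Finset.mem_coe.2 (Finset.mem_union_left _ h)
      · exact Finset.mem_coe.2 (Finset.mem_union_right _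
          (Finset.mem_biUnion.2 ⟨j, Finset.mem_univ j, (mem_negPart_iff a d hd j v).2 h⟩))
    · intro hv
      rcases Finset.mem_union.1 (Finset.mem_coe.1 hv) with h | h
      · exact posPart_mem_setA ha hd v h
      · obtain ⟨j, _, hj⟩ := Finset.mem_biUnion.1 h
        exact negCond_mem_setA ha hd j v ((mem_negPart_iff a d hd j v).1 hj)
  have hdisj1 : Disjoint (A11pos a d) (Finset.univ.biUnion (A11neg a d)) := by
    rw [Finset.disjoint_left]
    intro v hp hn
    obtain ⟨j, _, hj⟩ := Finset.mem_biUnion.1 hn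
    have h1 := one_le_of_mem_A11pos hp j
    have h2 := ((mem_negPart_iff a d hd j v).1 hj).1.2
    linarith
  have hdisj2 : ∀ x ∈ Finset.univ, ∀ y ∈ Finset.univ, x ≠ y →
      Disjoint (A11neg a d x) (A11neg a d y) := by
    intro x _ y _ hxy
    rcases lt_or_gt_of_ne hxy with h | h
    · exact A11neg_disj hd h
    · exact (A11neg_disj hd h).symm
  rw [hset, Set.ncard_coe_finset, hF, Finset.card_union_of_disjoint hdisj1,
    Finset.card_biUnion hdisj2]
  push_cast
  rw [card_A11pos ha hd]
  rw [Finset.sum_congr rfl (fun (j : Fin m) _ => card_A11neg ha hd j)]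
  rw [← Finset.sum_mul]
  ring
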